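/- Let X be a totally bounded metric space, H a Hilbert space, ρ : C_b(X) → B(H) a bounded *-homomorphism, and T ∈ B(H) an operator such that [T, ρ(f)] is compact for every bounded continuous f. Then for all R, L > 0 the collection {[T, ρ(f)] : f ∈ L-Lip_R(X)} is uniformly approximable. -/

import Mathlib

open BoundedContinuousFunction

/-- A collection of operators on a Hilbert space is *uniformly approximable* if for every
`ε > 0` there is a common `N` such that every member of the collection is within `ε`
(in operator norm) of an operator of rank at most `N`. -/
def UniformlyApproximable {H : Type*} [NormedAddCommGroup H] [InnerProductSpace ℂ H]
    (𝒜 : Set (H →L[ℂ] H)) : Prop :=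
  ∀ ε > (0 : ℝ), ∃ N : ℕ, ∀ T ∈ 𝒜, ∃ k : H →L[ℂ] H,
    LinearMap.rank (k : H →ₗ[ℂ] H) ≤ (N : Cardinal) ∧ ‖T - k‖ < ε

/-- `f ∈ L-Lip_R(X)`: a bounded continuous function which is `L`-Lipschitz, has sup-norm
at most `1`, and whose support has diameter at most `R`. -/
def MemLLipR {X : Type*} [MetricSpace X] (L R : ℝ) (f : X →ᵇ ℂ) : Prop :=
  LipschitzWith (Real.toNNReal L) ⇑f ∧ ‖f‖ ≤ 1 ∧ Metric.diam (Function.support ⇑f) ≤ R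


/-- A compact operator on a Hilbert space is within `ε` of a finite-rank operator. -/
lemma exists_finiteRank_approx {H : Type*} [NormedAddCommGroup H] [InnerProductSpace ℂ H]
    [CompleteSpace H] (K : H →L[ℂ] H) (hK : IsCompactOperator (⇑K)) {ε : ℝ} (hε : 0 < ε) :
    ∃ (n : ℕ) (k : H →L[ℂ] H),
      LinearMap.rank (k : H →ₗ[ℂ] H) ≤ (n : Cardinal) ∧ ‖K - k‖ < ε := by
  have hK' : IsCompactOperator (⇑(K : H →ₗ[ℂ] H)) := hK
  have hcpt : IsCompact (closure ((K : H →ₗ[ℂ] H) '' Metric.closedBall 0 1)) :=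
    hK'.isCompact_closure_image_closedBall (𝕜₁ := ℂ) 1
  have htb : TotallyBounded (⇑K '' Metric.closedBall 0 1) :=
    hcpt.totallyBounded.subset subset_closure
  obtain ⟨t, htfin, htcov⟩ := Metric.totallyBounded_iff.1 htb (ε / 2) (by positivity)
  set F : Submodule ℂ H := Submodule.span ℂ t with hF
  haveI : FiniteDimensional ℂ F := FiniteDimensional.span_of_finite ℂ htfin
  haveI : CompleteSpace F := FiniteDimensional.complete ℂ F
  set P := F.orthogonalProjectionOnto
  set k : H →L[ℂ] H := F.subtypeL.comp (P.comp K) with hk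
  -- rank bound
  haveI := htfin.to_subtype
  obtain ⟨n, hn⟩ := Cardinal.lt_aleph0.1 (Cardinal.lt_aleph0_of_finite t)
  refine ⟨n, k, ?_, ?_⟩
  · have hrange : LinearMap.range (k : H →ₗ[ℂ] H) ≤ F := by
      rintro y ⟨x, rfl⟩
      exact (P (K x)).2
    calc LinearMap.rank (k : H →ₗ[ℂ] H)
        ≤ Module.rank ℂ F := Submodule.rank_mono hrange
      _ ≤ Cardinal.mk t := rank_span_le t
      _ = n := hn
  · have key : ∀ x : H, ‖(K - k) x‖ ≤ ε / 2 * ‖x‖ := by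
      intro x
      rcases eq_or_ne x 0 with rfl | hx
      · simp
      · have hxn : (0 : ℝ) < ‖x‖ := norm_pos_iff.2 hx
        set c : ℂ := (‖x‖ : ℂ) with hc
        have hcn : ‖c‖ = ‖x‖ := by simp [hc, abs_of_nonneg hxn.le]
        have hc0 : c ≠ 0 := by
          simpa [hc] using hxn.ne'
        set u : H := c⁻¹ • x with hu
        have hun : ‖u‖ = 1 := by
          rw [hu, norm_smul, norm_inv, hcn, inv_mul_cancel₀ hxn.ne']
        have humem : u ∈ Metric.closedBall (0 : H) 1 := by
          simp [hun]
        have : K u ∈ ⋃ y ∈ t, Metric.ball y (ε / 2) := htcov ⟨u, humem, rfl⟩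
        obtain ⟨y, hy, hby⟩ := Set.mem_iUnion₂.1 this
        have hyF : y ∈ F := Submodule.subset_span hy
        have hmin : ‖K u - P (K u)‖ ≤ ‖K u - y‖ := by
          rw [show ((P (K u) : F) : H) = F.starProjection (K u) from rfl, Submodule.starProjection_minimal]
          exact ciInf_le ⟨0, fun b ⟨w, hw⟩ => hw ▸ norm_nonneg _⟩ (⟨y, hyF⟩ : F)
        have hu2 : ‖(K - k) u‖ ≤ ε / 2 := by
          have : (K - k) u = K u - P (K u) := by simp [hk]
          rw [this]
          exact hmin.trans (le_of_lt (by simpa [Metric.mem_ball, dist_eq_norm] using hby))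
        have hxu : (K - k) x = c • (K - k) u := by
          rw [hu, map_smul, smul_smul, mul_inv_cancel₀ hc0, one_smul]
        rw [hxu, norm_smul, hcn, mul_comm]
        exact mul_le_mul_of_nonneg_right hu2 hxn.le
    have : ‖K - k‖ ≤ ε / 2 := ContinuousLinearMap.opNorm_le_bound _ (by positivity) key
    linarith
open BoundedContinuousFunction

lemma totallyBounded_lip {X : Type*} [MetricSpace X]
    (htb : TotallyBounded (Set.univ : Set X)) (C : NNReal) :
    TotallyBounded {f : X →ᵇ ℂ | LipschitzWith C ⇑f ∧ ‖f‖ ≤ 1} := by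
  set 𝒮 := {f : X →ᵇ ℂ | LipschitzWith C ⇑f ∧ ‖f‖ ≤ 1} with h𝒮
  rw [Metric.totallyBounded_iff]
  intro ε hε
  set δ : ℝ := ε / 4 / ((C : ℝ) + 1) with hδdef
  have hC1 : (0 : ℝ) < (C : ℝ) + 1 := by positivity
  have hδ : 0 < δ := by positivity
  obtain ⟨s, hsfin, hscov⟩ := Metric.totallyBounded_iff.1 htb δ hδ
  haveI := hsfin.fintype
  set e : (X →ᵇ ℂ) → (↥s → ℂ) := fun f x => f x with he
  have hEb : TotallyBounded (e '' 𝒮) := by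
    refine TotallyBounded.subset ?_ (isCompact_closedBall (0 : ↥s → ℂ) 1).totallyBounded
    rintro _ ⟨f, hf, rfl⟩
    rw [Metric.mem_closedBall]
    refine (dist_pi_le_iff (by norm_num)).2 fun x => ?_
    simpa [he] using (f.norm_coe_le_norm x).trans hf.2
  obtain ⟨t, hts, htfin, htcov⟩ := Metric.finite_approx_of_totallyBounded hEb (ε / 4) (by positivity)
  have hch : ∀ y ∈ t, ∃ f, f ∈ 𝒮 ∧ e f = y := fun y hy => hts hy
  choose! g hg1 hg2 using hch
  refine ⟨g '' t, htfin.image _, ?_⟩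
  intro f hf
  have : e f ∈ ⋃ y ∈ t, Metric.ball y (ε / 4) := htcov ⟨f, hf, rfl⟩
  obtain ⟨y, hy, hby⟩ := Set.mem_iUnion₂.1 this
  refine Set.mem_iUnion₂.2 ⟨g y, ⟨y, hy, rfl⟩, ?_⟩
  rw [Metric.mem_ball]
  have key : ∀ z : X, dist (f z) (g y z) ≤ 3 * (ε / 4) := by
    intro z
    have : z ∈ ⋃ x ∈ s, Metric.ball x δ := hscov (Set.mem_univ z)
    obtain ⟨x, hx, hbx⟩ := Set.mem_iUnion₂.1 this
    have hzx : dist z x < δ := Metric.mem_ball.1 hbx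
    have h1 : dist (f z) (f x) ≤ ε / 4 := by
      refine (hf.1.dist_le_mul z x).trans ?_
      have : (C : ℝ) * dist z x ≤ ((C : ℝ) + 1) * δ := by
        apply mul_le_mul (by linarith) hzx.le dist_nonneg hC1.le
      refine this.trans ?_
      rw [hδdef, mul_div_cancel₀ _ hC1.ne']
    have h3 : dist (g y z) (g y x) ≤ ε / 4 := by
      refine ((hg1 y hy).1.dist_le_mul z x).trans ?_
      have : (C : ℝ) * dist z x ≤ ((C : ℝ) + 1) * δ := by
        apply mul_le_mul (by linarith) hzx.le dist_nonneg hC1.le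
      refine this.trans ?_
      rw [hδdef, mul_div_cancel₀ _ hC1.ne']
    have h2 : dist (f x) (g y x) ≤ ε / 4 := by
      have h5 : dist (e f) (e (g y)) < ε / 4 := by
        rw [hg2 y hy]; exact Metric.mem_ball.1 hby
      simpa [he] using (dist_le_pi_dist (e f) (e (g y)) ⟨x, hx⟩).trans h5.le
    calc dist (f z) (g y z) ≤ dist (f z) (f x) + dist (f x) (g y x) + dist (g y x) (g y z) :=
          dist_triangle4 _ _ _ _
      _ ≤ ε / 4 + ε / 4 + ε / 4 := by
          gcongr
          rw [dist_comm]; exact h3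
      _ = 3 * (ε / 4) := by ring
  have : dist f (g y) ≤ 3 * (ε / 4) := (dist_le (by positivity)).2 key
  linarith

/-- If `X` is a totally bounded metric space, `ρ : C_b(X) → B(H)` a bounded
`*`-homomorphism, and `T ∈ B(H)` has compact commutator `[T, ρ(f)]` with all bounded
continuous `f`, then for all `R, L > 0` the collection `{[T, ρ(f)] : f ∈ L-Lip_R(X)}` is
uniformly approximable. -/
theorem uniformlyApproximable_commutators_of_totallyBounded
    {X : Type*} [MetricSpace X] (htb : TotallyBounded (Set.univ : Set X))
    {H : Type*} [NormedAddCommGroup H] [InnerProductSpace ℂ H] [CompleteSpace H]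
    (ρ : (X →ᵇ ℂ) →⋆ₐ[ℂ] (H →L[ℂ] H)) (hρ : Continuous ρ)
    (T : H →L[ℂ] H)
    (hT : ∀ f : X →ᵇ ℂ, IsCompactOperator (T * ρ f - ρ f * T)) :
    ∀ R > (0 : ℝ), ∀ L > (0 : ℝ),
      UniformlyApproximable {A | ∃ f : X →ᵇ ℂ, MemLLipR L R f ∧ A = T * ρ f - ρ f * T} := by
  intro R hR L hL ε hε
  set ρ' : (X →ᵇ ℂ) →L[ℂ] (H →L[ℂ] H) := ⟨ρ.toAlgHom.toLinearMap, hρ⟩ with hρ'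
  set M : ℝ := 2 * ‖T‖ * ‖ρ'‖ + 1 with hM
  have hM0 : (0 : ℝ) < M := by positivity
  set δ : ℝ := ε / 2 / M with hδ
  have hδ0 : (0 : ℝ) < δ := by positivity
  obtain ⟨G, hGfin, hGcov⟩ :=
    Metric.totallyBounded_iff.1 (totallyBounded_lip htb (Real.toNNReal L)) δ hδ0
  have hap : ∀ g ∈ G, ∃ (n : ℕ) (k : H →L[ℂ] H),
      LinearMap.rank (k : H →ₗ[ℂ] H) ≤ (n : Cardinal) ∧ ‖(T * ρ g - ρ g * T) - k‖ < ε / 2 :=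
    fun g _ => exists_finiteRank_approx _ (hT g) (by positivity)
  choose! n k hrank hnorm using hap
  refine ⟨hGfin.toFinset.sup n, ?_⟩
  rintro A ⟨f, hf, rfl⟩
  have hf' : f ∈ {f : X →ᵇ ℂ | LipschitzWith (Real.toNNReal L) ⇑f ∧ ‖f‖ ≤ 1} :=
    ⟨hf.1, hf.2.1⟩
  obtain ⟨g, hg, hbg⟩ := Set.mem_iUnion₂.1 (hGcov hf')
  have hdist : dist f g < δ := Metric.mem_ball.1 hbg
  refine ⟨k g, ?_, ?_⟩
  · exact (hrank g hg).trans
      (Nat.cast_le.2 (Finset.le_sup (hGfin.mem_toFinset.2 hg)))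
  · have hcomm : (T * ρ f - ρ f * T) - (T * ρ g - ρ g * T)
        = T * (ρ' (f - g)) - (ρ' (f - g)) * T := by
      have : ρ' (f - g) = ρ f - ρ g := by
        simp [hρ', map_sub]; rfl
      rw [this]; noncomm_ring
    have h1 : ‖(T * ρ f - ρ f * T) - (T * ρ g - ρ g * T)‖ ≤ ε / 2 := by
      rw [hcomm]
      have hc : ‖ρ' (f - g)‖ ≤ ‖ρ'‖ * ‖f - g‖ := ρ'.le_opNorm _
      have hfg : ‖f - g‖ ≤ δ := by rw [← dist_eq_norm]; exact hdist.le
      calc ‖T * (ρ' (f - g)) - (ρ' (f - g)) * T‖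
          ≤ ‖T * (ρ' (f - g))‖ + ‖(ρ' (f - g)) * T‖ := norm_sub_le _ _
        _ ≤ ‖T‖ * ‖ρ' (f - g)‖ + ‖ρ' (f - g)‖ * ‖T‖ := by
            gcongr <;> exact norm_mul_le _ _
        _ = 2 * ‖T‖ * ‖ρ' (f - g)‖ := by ring
        _ ≤ 2 * ‖T‖ * (‖ρ'‖ * δ) := by
            refine mul_le_mul_of_nonneg_left ?_ (by positivity)
            exact hc.trans (mul_le_mul_of_nonneg_left hfg (norm_nonneg ρ'))
        _ = (2 * ‖T‖ * ‖ρ'‖) * δ := by ring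
        _ ≤ M * δ := mul_le_mul_of_nonneg_right (by rw [hM]; linarith) hδ0.le
        _ = ε / 2 := by rw [hδ, mul_comm, div_mul_cancel₀ _ hM0.ne']
    calc ‖(T * ρ f - ρ f * T) - k g‖
        ≤ ‖(T * ρ f - ρ f * T) - (T * ρ g - ρ g * T)‖ + ‖(T * ρ g - ρ g * T) - k g‖ := by
          have : (T * ρ f - ρ f * T) - k g
              = ((T * ρ f - ρ f * T) - (T * ρ g - ρ g * T)) + ((T * ρ g - ρ g * T) - k g) := by
            abel
          rw [this]; exact norm_add_le _ _
      _ < ε / 2 + ε / 2 := add_lt_add_of_le_of_lt h1 (hnorm g hg)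
      _ = ε := by ring
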